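/- Let $d \ge 3$. There exists a constant $C>0$ such that for any integer $r \ge 1$, any $\rho > 0$, and any finite subset $\Lambda \subseteq \mathbb{Z}^d$ satisfying $|\Lambda \cap Q(z,r)| \le \rho r^d$ for all $z \in r\mathbb{Z}^d$, one has $\sum_{z \in \Lambda \setminus Q(0,r)} \frac{1}{1+\|z\|^{d-2}} \le C \rho^{1 - 2/d} |\Lambda|^{2/d}$. -/

import Mathlib

/-- Euclidean norm of a point of `ℤ^d`. -/
noncomputable def euclidNorm (d : ℕ) (z : Fin d → ℤ) : ℝ :=
  Real.sqrt (∑ i, ((z i : ℝ)) ^ 2)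

/-- `z` belongs to the discrete cube `Q(x,r) = [x - r/2, x + r/2)^d ∩ ℤ^d`. -/
def inCube (d : ℕ) (x : Fin d → ℤ) (r : ℝ) (z : Fin d → ℤ) : Prop :=
  ∀ i, (x i : ℝ) - r / 2 ≤ (z i : ℝ) ∧ (z i : ℝ) < (x i : ℝ) + r / 2

section Aux

open scoped Classical

lemma euclidNorm_nonneg (d : ℕ) (z : Fin d → ℤ) : 0 ≤ euclidNorm d z :=
  Real.sqrt_nonneg _

lemma abs_le_euclidNorm (d : ℕ) (z : Fin d → ℤ) (i : Fin d) :
    |(z i : ℝ)| ≤ euclidNorm d z := by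
  rw [← Real.sqrt_sq_eq_abs]
  apply Real.sqrt_le_sqrt
  exact Finset.single_le_sum (fun j _ => sq_nonneg ((z j : ℝ))) (Finset.mem_univ i)

lemma half_le_norm (d : ℕ) (r : ℕ) (z : Fin d → ℤ)
    (hz : ¬ inCube d 0 (r : ℝ) z) : (r : ℝ) / 2 ≤ euclidNorm d z := by
  simp only [inCube, not_forall] at hz
  obtain ⟨i, hi⟩ := hz
  have hr0 : (0:ℝ) ≤ r := Nat.cast_nonneg r
  have h : (r : ℝ) / 2 ≤ |(z i : ℝ)| := by
    rw [not_and_or] at hi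
    rcases hi with h | h
    · push_neg at h
      simp only [Pi.zero_apply, Int.cast_zero, zero_sub] at h
      rw [abs_of_nonpos (by linarith)]
      linarith
    · push_neg at h
      simp only [Pi.zero_apply, Int.cast_zero, zero_add] at h
      rw [abs_of_nonneg (by linarith [le_trans (by positivity : (0:ℝ) ≤ r/2) h])]
      linarith
  exact h.trans (abs_le_euclidNorm d z i)

lemma count_lemma (d : ℕ) (r : ℕ) (hr : 1 ≤ r) (ρ : ℝ) (hρ : 0 < ρ)
    (Λ : Finset (Fin d → ℤ))
    (hΛ : ∀ z : Fin d → ℤ, (∀ i, (r : ℤ) ∣ z i) →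
      ((Λ.filter (inCube d z r)).card : ℝ) ≤ ρ * (r : ℝ) ^ d) (j : ℕ) :
    ((Λ.filter (fun z => euclidNorm d z < 2 ^ j * r)).card : ℝ)
      ≤ 2 ^ ((j + 2) * d) * (ρ * (r : ℝ) ^ d) := by
  set K : ℤ := 2 ^ j with hK
  have hK0 : 0 < K := by positivity
  have hrZ : (0 : ℤ) < (r : ℤ) := by exact_mod_cast hr
  set box : Finset (Fin d → ℤ) := Fintype.piFinset (fun _ => Finset.Icc (-K) K) with hbox
  -- the rounding map
  set k : (Fin d → ℤ) → (Fin d → ℤ) := fun z i => (2 * z i + r) / (2 * r) with hk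
  have hdiv : ∀ (z : Fin d → ℤ) (i : Fin d),
      2 * r * k z i ≤ 2 * z i + r ∧ 2 * z i + r < 2 * r * k z i + 2 * r := by
    intro z i
    simp only [hk]
    have h2r : (0 : ℤ) < 2 * r := by omega
    have hdm := Int.mul_ediv_add_emod (2 * z i + r) (2 * r)
    have hm0 := Int.emod_nonneg (2 * z i + r) (by omega : (2 * (r:ℤ)) ≠ 0)
    have hml := Int.emod_lt_of_pos (2 * z i + r) h2r
    constructor
    · omega
    · omega
  have hsub : Λ.filter (fun z => euclidNorm d z < 2 ^ j * r) ⊆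
      box.biUnion (fun c => Λ.filter (inCube d (fun i => (r : ℤ) * c i) r)) := by
    intro z hz
    rw [Finset.mem_filter] at hz
    obtain ⟨hzΛ, hznorm⟩ := hz
    rw [Finset.mem_biUnion]
    refine ⟨k z, ?_, ?_⟩
    · rw [hbox, Fintype.mem_piFinset]
      intro i
      rw [Finset.mem_Icc]
      have h1 := (hdiv z i).1
      have h2 := (hdiv z i).2
      have habs : |(z i : ℝ)| < 2 ^ j * r := lt_of_le_of_lt (abs_le_euclidNorm d z i) hznorm
      have habsZ : |z i| < K * r := by
        have hcast : ((K * r : ℤ) : ℝ) = 2 ^ j * r := by rw [hK]; push_cast; ring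
        have : (|z i| : ℝ) < ((K * r : ℤ) : ℝ) := by rw [hcast]; exact habs
        exact_mod_cast this
      rw [abs_lt] at habsZ
      constructor
      · nlinarith [habsZ.1]
      · nlinarith [habsZ.2]
    · rw [Finset.mem_filter]
      refine ⟨hzΛ, fun i => ?_⟩
      have h1 := (hdiv z i).1
      have h2 := (hdiv z i).2
      have h1' : (2 * r * k z i : ℝ) ≤ 2 * z i + r := by exact_mod_cast h1
      have h2' : (2 * z i + r : ℝ) < 2 * r * k z i + 2 * r := by exact_mod_cast h2
      have hrR : (0:ℝ) < r := by exact_mod_cast hr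
      constructor
      · push_cast at h1' ⊢; linarith
      · push_cast at h2' ⊢; linarith
  have hcard := Finset.card_le_card hsub
  have hbu := Finset.card_biUnion_le (s := box)
    (t := fun c => Λ.filter (inCube d (fun i => (r : ℤ) * c i) r))
  have hsum : ((box.biUnion (fun c => Λ.filter (inCube d (fun i => (r : ℤ) * c i) r))).card : ℝ)
      ≤ (box.card : ℝ) * (ρ * (r : ℝ) ^ d) := by
    calc ((box.biUnion _).card : ℝ) ≤
        ∑ c ∈ box, ((Λ.filter (inCube d (fun i => (r : ℤ) * c i) r)).card : ℝ) := by
          exact_mod_cast hbu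
      _ ≤ ∑ c ∈ box, (ρ * (r : ℝ) ^ d) := by
          apply Finset.sum_le_sum
          intro c _
          exact hΛ _ (fun i => dvd_mul_right _ _)
      _ = (box.card : ℝ) * (ρ * (r : ℝ) ^ d) := by rw [Finset.sum_const, nsmul_eq_mul]
  have hboxcard : (box.card : ℝ) ≤ 2 ^ ((j + 2) * d) := by
    have : box.card = (2 * 2 ^ j + 1) ^ d := by
      have hIcc : (Finset.Icc (-K) K).card = 2 * 2 ^ j + 1 := by
        rw [Int.card_Icc]
        have : K + 1 - -K = ((2 * 2 ^ j + 1 : ℕ) : ℤ) := by rw [hK]; push_cast; ring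
        rw [this, Int.toNat_natCast]
      rw [hbox, Fintype.card_piFinset]
      simp only [hIcc]
      rw [Finset.prod_const, Finset.card_univ, Fintype.card_fin]
    rw [this]
    have h1 : ((2 * 2 ^ j + 1 : ℕ) : ℝ) ≤ 2 ^ (j + 2) := by
      push_cast
      have : (2:ℝ) ^ (j+2) = 4 * 2 ^ j := by ring
      rw [this]
      nlinarith [one_le_pow₀ (one_le_two : (1:ℝ) ≤ 2) (n := j)]
    calc ((2 * 2 ^ j + 1) ^ d : ℕ) = (((2 * 2 ^ j + 1 : ℕ) : ℝ)) ^ d := by push_cast; ring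
      _ ≤ ((2:ℝ) ^ (j + 2)) ^ d := by
          apply pow_le_pow_left₀ (by positivity) h1
      _ = 2 ^ ((j + 2) * d) := by rw [← pow_mul]
  calc ((Λ.filter (fun z => euclidNorm d z < 2 ^ j * r)).card : ℝ)
      ≤ ((box.biUnion (fun c => Λ.filter (inCube d (fun i => (r : ℤ) * c i) r))).card : ℝ) := by
        exact_mod_cast hcard
    _ ≤ (box.card : ℝ) * (ρ * (r : ℝ) ^ d) := hsum
    _ ≤ 2 ^ ((j + 2) * d) * (ρ * (r : ℝ) ^ d) := by
        apply mul_le_mul_of_nonneg_right hboxcard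
        positivity

lemma inv_one_add_pow_le (e : ℕ) (a n : ℝ) (ha : 0 < a) (han : a ≤ n) :
    1 / (1 + n ^ e) ≤ 1 / a ^ e := by
  have hn : 0 < n := ha.trans_le han
  have h1 : a ^ e ≤ n ^ e := pow_le_pow_left₀ ha.le han e
  have h2 : (n : ℝ) ^ e ≤ 1 + n ^ e := by linarith
  exact one_div_le_one_div_of_le (by positivity) (h1.trans h2)

lemma pointwise_bound (d : ℕ) (r : ℕ) (hr : 1 ≤ r) (z : Fin d → ℤ)
    (hz : (r : ℝ) / 2 ≤ euclidNorm d z) (J : ℕ) (hJ : 1 ≤ J) :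
    1 / (1 + euclidNorm d z ^ (d - 2)) ≤
      1 / ((2 : ℝ) ^ J * r / 2) ^ (d - 2) +
      ∑ j ∈ Finset.range J,
        (if euclidNorm d z < 2 ^ j * r then 1 / ((2 : ℝ) ^ j * r / 2) ^ (d - 2) else 0) := by
  set n := euclidNorm d z with hn
  have hrR : (0 : ℝ) < r := by exact_mod_cast hr
  have hn0 : 0 < n := lt_of_lt_of_le (by positivity) hz
  set e := d - 2 with he
  have hsum_nonneg : ∀ j ∈ Finset.range J,
      (0:ℝ) ≤ (if n < 2 ^ j * r then 1 / ((2 : ℝ) ^ j * r / 2) ^ e else 0) := by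
    intro j _
    split
    · positivity
    · exact le_refl 0
  by_cases hbig : (2 : ℝ) ^ J * r / 2 ≤ n
  · have h1 : 1 / (1 + n ^ e) ≤ 1 / ((2 : ℝ) ^ J * r / 2) ^ e :=
      inv_one_add_pow_le e _ n (by positivity) hbig
    have h2 : (0:ℝ) ≤ ∑ j ∈ Finset.range J,
        (if n < 2 ^ j * r then 1 / ((2 : ℝ) ^ j * r / 2) ^ e else 0) :=
      Finset.sum_nonneg hsum_nonneg
    linarith
  · push_neg at hbig
    have h2J : (2:ℝ) ^ (J - 1) * r = 2 ^ J * r / 2 := by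
      have : (2:ℝ) ^ J = 2 * 2 ^ (J - 1) := by
        conv_lhs => rw [← Nat.succ_pred_eq_of_pos hJ]
        rw [pow_succ, Nat.pred_eq_sub_one]; ring
      rw [this]; ring
    have hP : ∃ j, n < 2 ^ j * r := ⟨J - 1, by rw [h2J]; exact hbig⟩
    classical
    set j₀ := Nat.find hP with hj₀
    have hspec : n < 2 ^ j₀ * r := Nat.find_spec hP
    have hj₀J : j₀ < J :=
      lt_of_le_of_lt (Nat.find_le (by rw [h2J]; exact hbig)) (Nat.sub_lt hJ one_pos)
    have hlow : (2 : ℝ) ^ j₀ * r / 2 ≤ n := by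
      rcases Nat.eq_zero_or_pos j₀ with h0 | hpos
      · rw [h0]; simpa using hz
      · have hmin := Nat.find_min hP (Nat.sub_lt hpos one_pos)
        push_neg at hmin
        have : (2:ℝ) ^ (j₀ - 1) * r ≤ n := hmin
        have h2 : (2:ℝ) ^ j₀ = 2 * 2 ^ (j₀ - 1) := by
          conv_lhs => rw [← Nat.succ_pred_eq_of_pos hpos]
          rw [pow_succ, Nat.pred_eq_sub_one]; ring
        rw [h2]
        linarith
    have hterm : 1 / (1 + n ^ e) ≤ 1 / ((2 : ℝ) ^ j₀ * r / 2) ^ e :=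
      inv_one_add_pow_le e _ n (by positivity) hlow
    have hsingle : 1 / ((2 : ℝ) ^ j₀ * r / 2) ^ e ≤
        ∑ j ∈ Finset.range J,
          (if n < 2 ^ j * r then 1 / ((2 : ℝ) ^ j * r / 2) ^ e else 0) := by
      have := Finset.single_le_sum hsum_nonneg (Finset.mem_range.mpr hj₀J)
      simpa [hspec] using this
    have hfirst : (0:ℝ) ≤ 1 / ((2 : ℝ) ^ J * r / 2) ^ e := by positivity
    linarith

lemma sum_bound (d : ℕ) (hd : 3 ≤ d) (r : ℕ) (hr : 1 ≤ r) (ρ : ℝ) (hρ : 0 < ρ)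
    (Λ : Finset (Fin d → ℤ))
    (hΛ : ∀ z : Fin d → ℤ, (∀ i, (r : ℤ) ∣ z i) →
      ((Λ.filter (inCube d z r)).card : ℝ) ≤ ρ * (r : ℝ) ^ d)
    (J : ℕ) (hJ : 1 ≤ J) :
    ∑ z ∈ Λ.filter (fun z => ¬ inCube d 0 (r : ℝ) z),
        1 / (1 + euclidNorm d z ^ (d - 2))
      ≤ (Λ.card : ℝ) / ((2 : ℝ) ^ J * r / 2) ^ (d - 2)
        + 2 ^ (3 * d) * ρ * (r : ℝ) ^ 2 * 4 ^ J := by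
  have hrR : (0 : ℝ) < r := by exact_mod_cast hr
  set S := Λ.filter (fun z => ¬ inCube d 0 (r : ℝ) z) with hS
  have step1 : ∑ z ∈ S, 1 / (1 + euclidNorm d z ^ (d - 2)) ≤
      ∑ z ∈ S, (1 / ((2 : ℝ) ^ J * r / 2) ^ (d - 2) +
        ∑ j ∈ Finset.range J,
          (if euclidNorm d z < 2 ^ j * r then 1 / ((2 : ℝ) ^ j * r / 2) ^ (d - 2) else 0)) := by
    apply Finset.sum_le_sum
    intro z hz
    rw [hS, Finset.mem_filter] at hz
    exact pointwise_bound d r hr z (half_le_norm d r z hz.2) J hJ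
  have step2 : ∑ z ∈ S, (1 / ((2 : ℝ) ^ J * r / 2) ^ (d - 2) +
        ∑ j ∈ Finset.range J,
          (if euclidNorm d z < 2 ^ j * r then 1 / ((2 : ℝ) ^ j * r / 2) ^ (d - 2) else 0))
      = (S.card : ℝ) / ((2 : ℝ) ^ J * r / 2) ^ (d - 2)
        + ∑ j ∈ Finset.range J, ((S.filter (fun z => euclidNorm d z < 2 ^ j * r)).card : ℝ)
            / ((2 : ℝ) ^ j * r / 2) ^ (d - 2) := by
    rw [Finset.sum_add_distrib, Finset.sum_const, nsmul_eq_mul]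
    congr 1
    · rw [mul_one_div]
    · rw [Finset.sum_comm]
      apply Finset.sum_congr rfl
      intro j _
      rw [← Finset.sum_filter, Finset.sum_const, nsmul_eq_mul, mul_one_div]
  -- bound the cardinalities
  obtain ⟨e, hde⟩ : ∃ e, d = e + 2 := ⟨d - 2, by omega⟩
  have he1 : 1 ≤ e := by omega
  have hScard : (S.card : ℝ) ≤ (Λ.card : ℝ) := by
    exact_mod_cast Finset.card_filter_le _ _
  have hfilter : ∀ j : ℕ, ((S.filter (fun z => euclidNorm d z < 2 ^ j * r)).card : ℝ)
      ≤ 2 ^ ((j + 2) * d) * (ρ * (r : ℝ) ^ d) := by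
    intro j
    refine le_trans ?_ (count_lemma d r hr ρ hρ Λ hΛ j)
    have : S.filter (fun z => euclidNorm d z < 2 ^ j * r) ⊆
        Λ.filter (fun z => euclidNorm d z < 2 ^ j * r) := by
      intro z hz
      simp only [hS, Finset.mem_filter] at hz ⊢
      exact ⟨hz.1.1, hz.2⟩
    exact_mod_cast Finset.card_le_card this
  have hgpos : ∀ j : ℕ, (0:ℝ) < ((2 : ℝ) ^ j * r / 2) ^ (d - 2) := by
    intro j; positivity
  have hterm : ∀ j : ℕ, 2 ^ ((j + 2) * d) * (ρ * (r : ℝ) ^ d)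
      / ((2 : ℝ) ^ j * r / 2) ^ (d - 2) = 2 ^ (3 * e + 4) * ρ * (r:ℝ) ^ 2 * 4 ^ j := by
    intro j
    have hd2 : d - 2 = e := by omega
    rw [hd2, hde]
    have hsplit : (2:ℝ) ^ ((j + 2) * (e + 2)) = 2 ^ (j * e) * 2 ^ (2 * j) * 2 ^ (2 * e) * 2 ^ 4 := by
      rw [← pow_add, ← pow_add, ← pow_add]
      congr 1
      ring
    have h4 : (4:ℝ) ^ j = 2 ^ (2 * j) := by rw [pow_mul]; norm_num
    have hg : ((2 : ℝ) ^ j * r / 2) ^ e = 2 ^ (j * e) * (r:ℝ) ^ e / 2 ^ e := by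
      rw [div_pow, mul_pow, ← pow_mul]
    rw [hsplit, h4, hg]
    have h1 : ((2:ℝ) ^ e) ≠ 0 := by positivity
    have h2 : ((r:ℝ) ^ e) ≠ 0 := by positivity
    have h3 : ((2:ℝ) ^ (j * e)) ≠ 0 := by positivity
    have hrd : (r:ℝ) ^ (e + 2) = (r:ℝ) ^ e * (r:ℝ) ^ 2 := by rw [pow_add]
    have h34 : (2:ℝ) ^ (3 * e + 4) = 2 ^ e * 2 ^ (2 * e) * 2 ^ 4 := by
      rw [← pow_add, ← pow_add]; congr 1; ring
    rw [hrd, h34]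
    field_simp
  have hsum2 : ∑ j ∈ Finset.range J, ((S.filter (fun z => euclidNorm d z < 2 ^ j * r)).card : ℝ)
            / ((2 : ℝ) ^ j * r / 2) ^ (d - 2)
      ≤ 2 ^ (3 * d) * ρ * (r : ℝ) ^ 2 * 4 ^ J := by
    calc ∑ j ∈ Finset.range J, ((S.filter (fun z => euclidNorm d z < 2 ^ j * r)).card : ℝ)
            / ((2 : ℝ) ^ j * r / 2) ^ (d - 2)
        ≤ ∑ j ∈ Finset.range J, 2 ^ ((j + 2) * d) * (ρ * (r : ℝ) ^ d)
            / ((2 : ℝ) ^ j * r / 2) ^ (d - 2) := by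
          apply Finset.sum_le_sum
          intro j _
          gcongr
          exact hfilter j
      _ = ∑ j ∈ Finset.range J, 2 ^ (3 * e + 4) * ρ * (r:ℝ) ^ 2 * 4 ^ j := by
          apply Finset.sum_congr rfl
          intro j _
          exact hterm j
      _ = 2 ^ (3 * e + 4) * ρ * (r:ℝ) ^ 2 * ∑ j ∈ Finset.range J, 4 ^ j := by
          rw [← Finset.mul_sum]
      _ ≤ 2 ^ (3 * e + 4) * ρ * (r:ℝ) ^ 2 * 4 ^ J := by
          apply mul_le_mul_of_nonneg_left _ (by positivity)
          have := geom_sum_eq (by norm_num : (4:ℝ) ≠ 1) J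
          rw [this]
          have h4J : (1:ℝ) ≤ 4 ^ J := one_le_pow₀ (by norm_num)
          nlinarith
      _ ≤ 2 ^ (3 * d) * ρ * (r:ℝ) ^ 2 * 4 ^ J := by
          apply mul_le_mul_of_nonneg_right _ (by positivity)
          apply mul_le_mul_of_nonneg_right _ (by positivity)
          apply mul_le_mul_of_nonneg_right _ (hρ.le)
          apply pow_le_pow_right₀ one_le_two
          omega
  calc ∑ z ∈ S, 1 / (1 + euclidNorm d z ^ (d - 2))
      ≤ (S.card : ℝ) / ((2 : ℝ) ^ J * r / 2) ^ (d - 2)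
        + ∑ j ∈ Finset.range J, ((S.filter (fun z => euclidNorm d z < 2 ^ j * r)).card : ℝ)
            / ((2 : ℝ) ^ j * r / 2) ^ (d - 2) := by rw [← step2]; exact step1
    _ ≤ (Λ.card : ℝ) / ((2 : ℝ) ^ J * r / 2) ^ (d - 2)
        + 2 ^ (3 * d) * ρ * (r : ℝ) ^ 2 * 4 ^ J := by
        apply add_le_add _ hsum2
        gcongr

lemma exists_J (t : ℝ) (ht : 1 ≤ t) :
    ∃ J : ℕ, 1 ≤ J ∧ t ≤ 2 ^ J ∧ (2 : ℝ) ^ J ≤ 2 * t := by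
  have ht0 : 0 < t := lt_of_lt_of_le one_pos ht
  set n := ⌊Real.logb 2 t⌋₊ with hn
  have hlog0 : 0 ≤ Real.logb 2 t := Real.logb_nonneg one_lt_two ht
  have h1 : (n : ℝ) ≤ Real.logb 2 t := Nat.floor_le hlog0
  have h2 : Real.logb 2 t < n + 1 := Nat.lt_floor_add_one _
  have hrpow : (2:ℝ) ^ (Real.logb 2 t) = t := Real.rpow_logb two_pos (by norm_num) ht0
  refine ⟨n + 1, Nat.le_add_left 1 n, ?_, ?_⟩
  · have : t = (2:ℝ) ^ (Real.logb 2 t) := hrpow.symm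
    rw [this]
    calc (2:ℝ) ^ (Real.logb 2 t) ≤ (2:ℝ) ^ ((n:ℝ) + 1) :=
          Real.rpow_le_rpow_of_exponent_le one_le_two (le_of_lt h2)
      _ = (2:ℝ) ^ (n + 1 : ℕ) := by
          rw [← Real.rpow_natCast]
          push_cast
          ring_nf
  · have hle : (2:ℝ) ^ (n : ℕ) ≤ t := by
      calc (2:ℝ) ^ (n : ℕ) = (2:ℝ) ^ ((n : ℕ) : ℝ) := by rw [Real.rpow_natCast]
        _ ≤ (2:ℝ) ^ (Real.logb 2 t) := Real.rpow_le_rpow_of_exponent_le one_le_two h1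
        _ = t := hrpow
    rw [pow_succ]
    linarith

lemma cast_sub2 (d : ℕ) (hd : 3 ≤ d) : ((d - 2 : ℕ) : ℝ) = (d : ℝ) - 2 := by
  have : (2:ℕ) ≤ d := by omega
  push_cast [Nat.cast_sub this]
  ring

lemma rd_pow (d : ℕ) (hd : 3 ≤ d) (r : ℝ) (hr : 0 < r) (c : ℝ) :
    ((r ^ (d : ℕ)) : ℝ) ^ (c / d) = r ^ c := by
  have hd0 : (d:ℝ) ≠ 0 := by positivity
  rw [← Real.rpow_natCast r d, ← Real.rpow_mul hr.le]
  congr 1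
  field_simp

lemma rpow_core2 (d : ℕ) (hd : 3 ≤ d) (ρ r M : ℝ) (hρ : 0 < ρ) (hr : 0 < r) (hM : 0 < M) :
    ρ * r ^ 2 * ((M / (ρ * r ^ d)) ^ ((1:ℝ)/d)) ^ 2
      = ρ ^ (1 - 2/(d:ℝ)) * M ^ (2/(d:ℝ)) := by
  have hd0 : (d:ℝ) ≠ 0 := by positivity
  have ha : 0 < ρ * r ^ d := by positivity
  have hMa : 0 < M / (ρ * r ^ d) := by positivity
  have hT2 : ((M / (ρ * r ^ d)) ^ ((1:ℝ)/d)) ^ 2 = (M / (ρ * r ^ d)) ^ ((2:ℝ)/d) := by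
    rw [← Real.rpow_natCast ((M / (ρ * r ^ d)) ^ ((1:ℝ)/d)) 2, ← Real.rpow_mul hMa.le]
    congr 1
    push_cast
    field_simp
  rw [hT2]
  rw [Real.div_rpow hM.le ha.le, Real.mul_rpow hρ.le (by positivity),
    rd_pow d hd r hr 2]
  have hr2 : r ^ (2:ℝ) = r ^ (2:ℕ) := by
    rw [← Real.rpow_natCast r 2]; norm_num
  rw [hr2]
  rw [Real.rpow_sub hρ, Real.rpow_one]
  field_simp

lemma rpow_core1 (d : ℕ) (hd : 3 ≤ d) (ρ r M : ℝ) (hρ : 0 < ρ) (hr : 0 < r) (hM : 0 < M) :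
    M / ((M / (ρ * r ^ d)) ^ ((1:ℝ)/d) * r) ^ (d - 2)
      = ρ ^ (1 - 2/(d:ℝ)) * M ^ (2/(d:ℝ)) := by
  have hd0 : (d:ℝ) ≠ 0 := by positivity
  have ha : 0 < ρ * r ^ d := by positivity
  have hMa : 0 < M / (ρ * r ^ d) := by positivity
  have hT : 0 < (M / (ρ * r ^ d)) ^ ((1:ℝ)/d) := Real.rpow_pos_of_pos hMa _
  set c : ℝ := (d:ℝ) - 2 with hc
  have hcast := cast_sub2 d hd
  have hnpow : ((M / (ρ * r ^ d)) ^ ((1:ℝ)/d) * r) ^ (d - 2 : ℕ)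
      = ((M / (ρ * r ^ d)) ^ ((1:ℝ)/d) * r) ^ c := by
    rw [← Real.rpow_natCast _ (d-2), hcast]
  rw [hnpow]
  rw [Real.mul_rpow hT.le hr.le]
  have hTc : ((M / (ρ * r ^ d)) ^ ((1:ℝ)/d)) ^ c = (M / (ρ * r ^ d)) ^ (c/d) := by
    rw [← Real.rpow_mul hMa.le]
    congr 1
    field_simp
  rw [hTc, Real.div_rpow hM.le ha.le, Real.mul_rpow hρ.le (by positivity),
    rd_pow d hd r hr c]
  have h1 : ρ ^ (1 - 2/(d:ℝ)) = ρ ^ (c/d) := by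
    congr 1
    rw [hc]; field_simp
  have h2 : M ^ (2/(d:ℝ)) = M / M ^ (c/d) := by
    rw [eq_div_iff (by positivity), ← Real.rpow_add hM]
    rw [show 2/(d:ℝ) + c/d = 1 by rw [hc]; field_simp; ring, Real.rpow_one]
  rw [h1, h2]
  have hMc : 0 < M ^ (c/d) := Real.rpow_pos_of_pos hM _
  have hrc : 0 < r ^ c := Real.rpow_pos_of_pos hr _
  have hρc : 0 < ρ ^ (c/d) := Real.rpow_pos_of_pos hρ _
  field_simp

lemma caseA_bound (d : ℕ) (hd : 3 ≤ d) (ρ r M : ℝ) (hρ : 0 < ρ) (hr : 0 < r) (hM : 0 < M)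
    (hle : M ≤ ρ * r ^ d) :
    M / (r/2) ^ (d - 2) ≤ 2 ^ (d-2) * (ρ ^ (1 - 2/(d:ℝ)) * M ^ (2/(d:ℝ))) := by
  have hd0 : (d:ℝ) ≠ 0 := by positivity
  set c : ℝ := (d:ℝ) - 2 with hc
  have hcast := cast_sub2 d hd
  have hrc : r ^ (d - 2 : ℕ) = r ^ c := by rw [← Real.rpow_natCast r (d-2), hcast]
  have h2c : (2:ℝ) ^ (d - 2 : ℕ) = (2:ℝ) ^ c := by
    rw [← Real.rpow_natCast (2:ℝ) (d-2), hcast]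
  have hdivpow : (r/2) ^ (d - 2 : ℕ) = r ^ c / 2 ^ c := by
    rw [div_pow, hrc, h2c]
  rw [hdivpow, h2c]
  have hrcpos : (0:ℝ) < r ^ c := Real.rpow_pos_of_pos hr _
  have h2cpos : (0:ℝ) < (2:ℝ) ^ c := Real.rpow_pos_of_pos two_pos _
  rw [div_div_eq_mul_div, mul_comm M ((2:ℝ)^c), mul_div_assoc]
  apply mul_le_mul_of_nonneg_left _ h2cpos.le
  rw [div_le_iff₀ hrcpos]
  have hsplit : M = M ^ (2/(d:ℝ)) * M ^ (c/(d:ℝ)) := by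
    rw [← Real.rpow_add hM, show 2/(d:ℝ) + c/d = 1 by rw [hc]; field_simp; ring, Real.rpow_one]
  have hMc : M ^ (c/(d:ℝ)) ≤ ρ ^ (c/(d:ℝ)) * r ^ c := by
    calc M ^ (c/(d:ℝ)) ≤ (ρ * r ^ d) ^ (c/(d:ℝ)) := by
          apply Real.rpow_le_rpow hM.le hle
          rw [hc]
          have h3 : (3:ℝ) ≤ d := by exact_mod_cast hd
          apply div_nonneg <;> linarith
      _ = ρ ^ (c/(d:ℝ)) * r ^ c := by
          rw [Real.mul_rpow hρ.le (by positivity), rd_pow d hd r hr c]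
  have h1 : ρ ^ (1 - 2/(d:ℝ)) = ρ ^ (c/(d:ℝ)) := by
    congr 1
    rw [hc]; field_simp
  rw [h1]
  calc M = M ^ (2/(d:ℝ)) * M ^ (c/(d:ℝ)) := hsplit
    _ ≤ M ^ (2/(d:ℝ)) * (ρ ^ (c/(d:ℝ)) * r ^ c) := by
        apply mul_le_mul_of_nonneg_left hMc (by positivity)
    _ = ρ ^ (c/(d:ℝ)) * M ^ (2/(d:ℝ)) * r ^ c := by ring

end Aux

open scoped Classical in
theorem stmt_4 (d : ℕ) (hd : 3 ≤ d) :
    ∃ C > 0, ∀ r : ℕ, 1 ≤ r → ∀ ρ : ℝ, 0 < ρ → ∀ Λ : Finset (Fin d → ℤ),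
      (∀ z : Fin d → ℤ, (∀ i, (r : ℤ) ∣ z i) →
        ((Λ.filter (inCube d z r)).card : ℝ) ≤ ρ * (r : ℝ) ^ d) →
      ∑ z ∈ Λ.filter (fun z => ¬ inCube d 0 (r : ℝ) z),
          1 / (1 + euclidNorm d z ^ (d - 2))
        ≤ C * ρ ^ (1 - 2 / (d : ℝ)) * (Λ.card : ℝ) ^ (2 / (d : ℝ)) := by
  refine ⟨2 ^ (3 * d + 3), by positivity, ?_⟩
  intro r hr ρ hρ Λ hΛ
  have hrR : (0:ℝ) < r := by exact_mod_cast hr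
  have hd0 : (d:ℝ) ≠ 0 := by positivity
  rcases Nat.eq_zero_or_pos Λ.card with h0 | hpos
  · have hemp : Λ = ∅ := Finset.card_eq_zero.mp h0
    rw [hemp]
    simp only [Finset.filter_empty, Finset.sum_empty, Finset.card_empty, Nat.cast_zero]
    rw [Real.zero_rpow (by positivity), mul_zero]
  · have hM0 : (0:ℝ) < (Λ.card : ℝ) := by exact_mod_cast hpos
    have hB0 : (0:ℝ) ≤ ρ ^ (1 - 2/(d:ℝ)) * (Λ.card : ℝ) ^ (2/(d:ℝ)) := by
      apply mul_nonneg (Real.rpow_nonneg hρ.le _) (Real.rpow_nonneg hM0.le _)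
    rw [mul_assoc]
    by_cases hcase : (Λ.card : ℝ) ≤ ρ * (r:ℝ) ^ d
    · -- few points: trivial bound
      have hstep : ∑ z ∈ Λ.filter (fun z => ¬ inCube d 0 (r : ℝ) z),
            1 / (1 + euclidNorm d z ^ (d - 2))
          ≤ ((Λ.filter (fun z => ¬ inCube d 0 (r : ℝ) z)).card : ℝ) * (1 / ((r:ℝ)/2) ^ (d - 2)) := by
        calc ∑ z ∈ Λ.filter (fun z => ¬ inCube d 0 (r : ℝ) z),
              1 / (1 + euclidNorm d z ^ (d - 2))
            ≤ ∑ _z ∈ Λ.filter (fun z => ¬ inCube d 0 (r : ℝ) z), (1 / ((r:ℝ)/2) ^ (d - 2)) := by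
              apply Finset.sum_le_sum
              intro z hz
              rw [Finset.mem_filter] at hz
              exact inv_one_add_pow_le (d-2) _ _ (by positivity) (half_le_norm d r z hz.2)
          _ = ((Λ.filter (fun z => ¬ inCube d 0 (r : ℝ) z)).card : ℝ)
                * (1 / ((r:ℝ)/2) ^ (d - 2)) := by
              rw [Finset.sum_const, nsmul_eq_mul]
      have hcard' : ((Λ.filter (fun z => ¬ inCube d 0 (r : ℝ) z)).card : ℝ) ≤ (Λ.card : ℝ) := by
        exact_mod_cast Finset.card_filter_le _ _
      calc ∑ z ∈ Λ.filter (fun z => ¬ inCube d 0 (r : ℝ) z),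
            1 / (1 + euclidNorm d z ^ (d - 2))
          ≤ ((Λ.filter (fun z => ¬ inCube d 0 (r : ℝ) z)).card : ℝ)
              * (1 / ((r:ℝ)/2) ^ (d - 2)) := hstep
        _ ≤ (Λ.card : ℝ) * (1 / ((r:ℝ)/2) ^ (d - 2)) := by
            apply mul_le_mul_of_nonneg_right hcard' (by positivity)
        _ = (Λ.card : ℝ) / ((r:ℝ)/2) ^ (d - 2) := by rw [mul_one_div]
        _ ≤ 2 ^ (d-2) * (ρ ^ (1 - 2/(d:ℝ)) * (Λ.card : ℝ) ^ (2/(d:ℝ))) :=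
            caseA_bound d hd ρ r (Λ.card : ℝ) hρ hrR hM0 hcase
        _ ≤ 2 ^ (3 * d + 3) * (ρ ^ (1 - 2/(d:ℝ)) * (Λ.card : ℝ) ^ (2/(d:ℝ))) := by
            apply mul_le_mul_of_nonneg_right _ hB0
            apply pow_le_pow_right₀ one_le_two
            omega
    · -- many points
      push_neg at hcase
      set a : ℝ := ρ * (r:ℝ) ^ d with ha
      have ha0 : 0 < a := by positivity
      set T : ℝ := ((Λ.card : ℝ) / a) ^ ((1:ℝ)/(d:ℝ)) with hT
      have hTa : 1 < (Λ.card : ℝ) / a := (one_lt_div ha0).mpr hcase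
      have hT1 : 1 ≤ T := by
        rw [hT]
        apply Real.one_le_rpow hTa.le (by positivity)
      have hT0 : 0 < T := lt_of_lt_of_le one_pos hT1
      obtain ⟨J, hJ1, hJl, hJu⟩ := exists_J T hT1
      have h2J0 : (0:ℝ) < 2 ^ J := by positivity
      have hmain := sum_bound d hd r hr ρ hρ Λ hΛ J hJ1
      -- bound the first term
      have hterm1 : (Λ.card : ℝ) / ((2 : ℝ) ^ J * r / 2) ^ (d - 2)
          ≤ 2 ^ (d - 2) * (ρ ^ (1 - 2/(d:ℝ)) * (Λ.card : ℝ) ^ (2/(d:ℝ))) := by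
        have hmono : (T * r) ^ (d - 2) ≤ ((2:ℝ) ^ J * r) ^ (d - 2) := by
          apply pow_le_pow_left₀ (by positivity)
          apply mul_le_mul_of_nonneg_right hJl hrR.le
        have hdiv2 : ((2 : ℝ) ^ J * r / 2) ^ (d - 2) = ((2:ℝ) ^ J * r) ^ (d-2) / 2 ^ (d-2) := by
          rw [div_pow]
        rw [hdiv2]
        rw [div_div_eq_mul_div, mul_comm ((Λ.card : ℝ)) ((2:ℝ) ^ (d-2)), mul_div_assoc]
        apply mul_le_mul_of_nonneg_left _ (by positivity)
        calc (Λ.card : ℝ) / ((2:ℝ) ^ J * r) ^ (d - 2)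
            ≤ (Λ.card : ℝ) / (T * r) ^ (d - 2) := by
              apply div_le_div_of_nonneg_left hM0.le _ hmono
              positivity
          _ = ρ ^ (1 - 2/(d:ℝ)) * (Λ.card : ℝ) ^ (2/(d:ℝ)) := by
              rw [hT, ha]
              exact rpow_core1 d hd ρ r (Λ.card : ℝ) hρ hrR hM0
      -- bound the second term
      have hterm2 : (2:ℝ) ^ (3 * d) * ρ * (r : ℝ) ^ 2 * 4 ^ J
          ≤ 2 ^ (3 * d + 2) * (ρ ^ (1 - 2/(d:ℝ)) * (Λ.card : ℝ) ^ (2/(d:ℝ))) := by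
        have h4J : (4:ℝ) ^ J ≤ 4 * T ^ 2 := by
          have : (4:ℝ) ^ J = ((2:ℝ) ^ J) ^ 2 := by
            rw [← pow_mul, mul_comm J 2, pow_mul]
            norm_num
          rw [this]
          calc ((2:ℝ) ^ J) ^ 2 ≤ (2 * T) ^ 2 := by
                apply pow_le_pow_left₀ (by positivity) hJu
            _ = 4 * T ^ 2 := by ring
        calc (2:ℝ) ^ (3 * d) * ρ * (r : ℝ) ^ 2 * 4 ^ J
            ≤ (2:ℝ) ^ (3 * d) * ρ * (r : ℝ) ^ 2 * (4 * T ^ 2) := by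
              apply mul_le_mul_of_nonneg_left h4J (by positivity)
          _ = 2 ^ (3 * d + 2) * (ρ * (r:ℝ) ^ 2 * T ^ 2) := by
              rw [pow_add]
              ring
          _ = 2 ^ (3 * d + 2) * (ρ ^ (1 - 2/(d:ℝ)) * (Λ.card : ℝ) ^ (2/(d:ℝ))) := by
              congr 1
              rw [hT, ha]
              exact rpow_core2 d hd ρ r (Λ.card : ℝ) hρ hrR hM0
      calc ∑ z ∈ Λ.filter (fun z => ¬ inCube d 0 (r : ℝ) z),
            1 / (1 + euclidNorm d z ^ (d - 2))
          ≤ (Λ.card : ℝ) / ((2 : ℝ) ^ J * r / 2) ^ (d - 2)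
            + 2 ^ (3 * d) * ρ * (r : ℝ) ^ 2 * 4 ^ J := hmain
        _ ≤ 2 ^ (d - 2) * (ρ ^ (1 - 2/(d:ℝ)) * (Λ.card : ℝ) ^ (2/(d:ℝ)))
            + 2 ^ (3 * d + 2) * (ρ ^ (1 - 2/(d:ℝ)) * (Λ.card : ℝ) ^ (2/(d:ℝ))) :=
            add_le_add hterm1 hterm2
        _ ≤ 2 ^ (3 * d + 3) * (ρ ^ (1 - 2/(d:ℝ)) * (Λ.card : ℝ) ^ (2/(d:ℝ))) := by
            have h1 : (2:ℝ) ^ (d - 2) ≤ 2 ^ (3 * d + 2) :=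
              pow_le_pow_right₀ one_le_two (by omega)
            have h2 : (2:ℝ) ^ (3 * d + 3) = 2 ^ (3 * d + 2) + 2 ^ (3 * d + 2) := by
              rw [pow_succ]
              ring
            rw [h2]
            nlinarith [hB0]
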